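/- Let C be an abelian k-linear category, I = {I_1, …, I_n} a finite set of objects, and D the full subcategory of finite direct sums of elements of I. Suppose Hom_C(C,D) is finite-dimensional over k for all C ∈ C and D ∈ D, and D is closed under subobjects. Then every object M of C has a unique smallest subobject N ⊆ M such that M/N lies in D. -/

import Mathlib

open CategoryTheory CategoryTheory.Limits

/-- Let `C` be an abelian `k`-linear category, `I : Fin n → C` a finite set
of objects, and `D` the full subcategory of finite direct sums of the `I i` (with repeats
allowed, closed under isomorphism).  Suppose `Hom_C(X, D)` is finite-dimensional over `k`
for every `X : C` and every `D` in `D`, and that `D` is closed under subobjects.  Then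
every object `M` of `C` has a unique smallest subobject `N ⊆ M` such that `M/N` lies in
`D`.  (The instance `[HasFiniteBiproducts C]` always holds in an abelian category; it is
included so that the finite direct sums `⨁` can be written.) -/
theorem exists_smallest_subobject_with_quotient_in_sums
    (k : Type*) [Field k] {C : Type*} [Category C] [Abelian C] [Linear k C]
    [HasFiniteBiproducts C]
    (n : ℕ) (I : Fin n → C)
    (D : C → Prop)
    (hD : ∀ X : C, D X ↔ ∃ (m : ℕ) (g : Fin m → Fin n), Nonempty (X ≅ ⨁ fun j => I (g j)))
    (hfin : ∀ (X Y : C), D Y → FiniteDimensional k (X ⟶ Y))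
    (hsub : ∀ (X Y : C) (f : X ⟶ Y), D Y → Mono f → D X) :
    ∀ M : C, ∃ N : Subobject M,
      D (cokernel N.arrow) ∧
      ∀ N' : Subobject M, D (cokernel N'.arrow) → N ≤ N' := by
  -- D is closed under isomorphism
  have hiso : ∀ {X Y : C}, (X ≅ Y) → D Y → D X := by
    intro X Y e hY
    obtain ⟨m, g, ⟨u⟩⟩ := (hD Y).mp hY
    exact (hD X).mpr ⟨m, g, ⟨e ≪≫ u⟩⟩
  -- each I i lies in D
  have hI : ∀ i : Fin n, D (I i) := by
    intro i
    refine (hD (I i)).mpr ⟨1, fun _ => i, ⟨?_⟩⟩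
    refine ⟨biproduct.lift fun _ => 𝟙 (I i), biproduct.π _ 0, by simp, ?_⟩
    ext j
    have : j = (0 : Fin 1) := Subsingleton.elim _ _
    subst this
    simp
  intro M
  -- finite-dimensionality of Hom(M, I i)
  have hfi : ∀ i : Fin n, FiniteDimensional k (M ⟶ I i) := fun i => hfin M (I i) (hI i)
  set d : Fin n → ℕ := fun i => Module.finrank k (M ⟶ I i) with hd
  have bas : ∀ i : Fin n, Module.Basis (Fin (d i)) k (M ⟶ I i) := fun i =>
    (Module.finBasis k (M ⟶ I i))
  -- the canonical map to the big biproduct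
  let σ := Σ i : Fin n, Fin (d i)
  let T : σ → C := fun p => I p.1
  let φ : M ⟶ ⨁ T := biproduct.lift fun p => bas p.1 p.2
  -- the big biproduct lies in D
  have hT : D (⨁ T) := by
    refine (hD (⨁ T)).mpr ⟨Fintype.card σ, fun j => ((Fintype.equivFin σ).symm j).1, ⟨?_⟩⟩
    exact biproduct.whiskerEquiv (Fintype.equivFin σ)
      (fun p => eqToIso (by simp [T]))
  refine ⟨kernelSubobject φ, ?_, ?_⟩
  · -- the quotient by the kernel is in D
    have harr : (kernelSubobjectIso φ).hom ≫ kernel.ι φ = (kernelSubobject φ).arrow := by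
      simp
    have e1 : cokernel (kernelSubobject φ).arrow ≅ cokernel (kernel.ι φ) := by
      exact (cokernelIsoOfEq harr.symm) ≪≫
        cokernelEpiComp (kernelSubobjectIso φ).hom (kernel.ι φ)
    have : Mono (Abelian.coimageImageComparison φ ≫ Abelian.image.ι φ) := mono_comp _ _
    have hco : D (Abelian.coimage φ) :=
      hsub _ _ (Abelian.coimageImageComparison φ ≫ Abelian.image.ι φ) hT this
    exact hiso e1 hco
  · -- minimality
    -- first: the kernel of φ kills every map M ⟶ I i
    have hkill : ∀ (i : Fin n) (f : M ⟶ I i), (kernelSubobject φ).arrow ≫ f = 0 := by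
      intro i f
      have hb : ∀ t : Fin (d i), (kernelSubobject φ).arrow ≫ bas i t = 0 := by
        intro t
        have : bas i t = φ ≫ biproduct.π T ⟨i, t⟩ := by simp [φ]
        rw [this, ← Category.assoc, kernelSubobject_arrow_comp, zero_comp]
      have hL : (Linear.leftComp k (I i) (kernelSubobject φ).arrow :
          (M ⟶ I i) →ₗ[k] ((kernelSubobject φ : C) ⟶ I i)) = 0 := by
        apply Module.Basis.ext (bas i)
        intro t
        simpa [Linear.leftComp] using hb t
      have := LinearMap.congr_fun hL f
      simpa [Linear.leftComp] using this
    intro N' hN'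
    obtain ⟨m', g', ⟨u⟩⟩ := (hD _).mp hN'
    -- show arrow composed with cokernel projection vanishes
    have h0 : (kernelSubobject φ).arrow ≫ cokernel.π N'.arrow = 0 := by
      have : ((kernelSubobject φ).arrow ≫ cokernel.π N'.arrow) ≫ u.hom = 0 ≫ u.hom := by
        rw [zero_comp]
        ext j
        have := hkill (g' j) (cokernel.π N'.arrow ≫ u.hom ≫ biproduct.π _ j)
        simpa using this
      exact (cancel_mono u.hom).mp this
    -- N' is the kernel of its cokernel since N'.arrow is mono
    have hMono : Mono N'.arrow := inferInstance
    obtain ⟨l, hl⟩ := KernelFork.IsLimit.lift'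
      (Abelian.monoIsKernelOfCokernel _ (cokernelIsCokernel N'.arrow))
      (kernelSubobject φ).arrow h0
    exact Subobject.le_of_comm l hl
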